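/- Let H be a functional spanning subgraph rooted at r of a digraph G (each vertex other than r has exactly one outgoing arc in H). Let W be a walk in G starting at r that avoids H (at each vertex it takes an unvisited arc outside H if one exists, otherwise the H-arc). If v is a vertex not lying on a cycle of H, and the walk W exhausts v (uses all arcs incident to v), then every vertex u in the subtree H_v of H converging to v is also exhausted by the prefix of W ending when v is exhausted. -/

import Mathlib

/-- The step relation of a subgraph `H` of a digraph. -/
def SubgraphStep {V E : Type*} (tl hd : E → V) (H : Set E) (x y : V) : Prop :=
  ∃ e ∈ H, tl e = x ∧ hd e = y

/-- A list of arcs `es` exhausts a vertex `v` if every arc having `v` as tail or head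
occurs in `es`. -/
def Exhausts {V E : Type*} (tl hd : E → V) (es : List E) (v : V) : Prop :=
  ∀ e : E, (tl e = v ∨ hd e = v) → e ∈ es

theorem walk_flow {V E : Type*} [DecidableEq V] (tl hd : E → V) :
    ∀ P : List E, List.Chain' (fun e f => hd e = tl f) P → ∀ u : V,
      P.countP (fun e => decide (tl e = u)) ≤
        P.countP (fun e => decide (hd e = u)) +
          (if P.head?.map tl = some u then 1 else 0) := by
  intro P
  induction P with
  | nil => intro _ u; simp
  | cons e rest ih =>
    intro hc u
    have hc' : List.Chain' (fun e f => hd e = tl f) rest := hc.tail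
    have key : (if rest.head?.map tl = some u then 1 else 0) ≤
        (if decide (hd e = u) = true then 1 else 0) := by
      cases rest with
      | nil => simp
      | cons f rest' =>
        have h : hd e = tl f := (List.isChain_cons_cons.mp hc).1
        simp [← h]
    have key2 : rest.countP (fun e => decide (tl e = u)) ≤
        rest.countP (fun e => decide (hd e = u)) +
          (if decide (hd e = u) = true then 1 else 0) :=
      (ih hc' u).trans (Nat.add_le_add_left key _)
    have key3 : (if decide (tl e = u) = true then 1 else 0) ≤
        (if (e :: rest).head?.map tl = some u then 1 else 0) := by
      by_cases h : tl e = u <;> simp [h]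
    simp only [List.countP_cons]
    calc rest.countP (fun e => decide (tl e = u)) + (if decide (tl e = u) = true then 1 else 0)
        ≤ (rest.countP (fun e => decide (hd e = u)) +
            (if decide (hd e = u) = true then 1 else 0)) +
          (if (e :: rest).head?.map tl = some u then 1 else 0) := Nat.add_le_add key2 key3
      _ = _ := by ring

theorem exhausts_of_out {V E : Type*} [Fintype E] [DecidableEq V] [DecidableEq E]
    (tl hd : E → V) (P : List E) (hnd : P.Nodup) (u : V)
    (hbalu : (Finset.univ.filter fun e : E => tl e = u).card =
             (Finset.univ.filter fun e : E => hd e = u).card)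
    (hflow : P.countP (fun e => decide (tl e = u)) ≤ P.countP (fun e => decide (hd e = u)))
    (hout : ∀ f : E, tl f = u → f ∈ P) :
    Exhausts tl hd P u := by
  have hcount : ∀ g : E → V, P.countP (fun e => decide (g e = u)) =
      (P.toFinset.filter fun e => g e = u).card := by
    intro g
    rw [List.countP_eq_length_filter, ← List.toFinset_card_of_nodup (hnd.filter _)]
    congr 1
    ext f
    simp
  have hOeq : (P.toFinset.filter fun e => tl e = u) = Finset.univ.filter fun e => tl e = u := by
    apply Finset.Subset.antisymm
    · intro f hf; simp only [Finset.mem_filter] at *; exact ⟨Finset.mem_univ f, hf.2⟩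
    · intro f hf; simp only [Finset.mem_filter, List.mem_toFinset] at *
      exact ⟨hout f hf.2, hf.2⟩
  have hle : (Finset.univ.filter fun e : E => hd e = u).card ≤
      (P.toFinset.filter fun e => hd e = u).card := by
    calc (Finset.univ.filter fun e : E => hd e = u).card
        = (P.toFinset.filter fun e => tl e = u).card := by rw [hOeq, hbalu]
      _ ≤ (P.toFinset.filter fun e => hd e = u).card := by
          rw [← hcount tl, ← hcount hd]; exact hflow
  have hIeq : (Finset.univ.filter fun e : E => hd e = u) =
      (P.toFinset.filter fun e => hd e = u) :=
    (Finset.eq_of_subset_of_card_le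
      (fun f hf => by simp only [Finset.mem_filter] at *; exact ⟨Finset.mem_univ f, hf.2⟩)
      hle).symm
  intro e he
  rcases he with h | h
  · exact hout e h
  · have : e ∈ P.toFinset.filter fun e => hd e = u := by
      rw [← hIeq]; simp [h]
    rw [Finset.mem_filter, List.mem_toFinset] at this
    exact this.1


/-- Exhaustion lemma. Let `H` be a functional spanning subgraph of a finite Eulerian digraph,
rooted at `r` (each vertex `v ≠ r` has exactly one outgoing `H`-arc, `r` has none).
Let `W` be a walk starting at `r` avoiding `H` (it uses the `H`-arc at a vertex only when
all other outgoing arcs of that vertex have already been visited). If `v` does not lie on a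
cycle of `H`, then any prefix of `W` that exhausts `v` also exhausts every vertex `u` of the
subtree `H_v` of `H` converging to `v`. -/
theorem exhausts_subtree {V E : Type*} [Fintype V] [Fintype E] [DecidableEq V] [DecidableEq E]
    (tl hd : E → V) (r : V) (H : Set E)
    -- H is a functional subgraph rooted at r
    (hfun : ∀ v : V, v ≠ r → ∃! e : E, e ∈ H ∧ tl e = v)
    (hroot : ∀ e ∈ H, tl e ≠ r)
    -- the digraph is Eulerian (balanced at every vertex)
    (hbal : ∀ v : V, (Finset.univ.filter fun e : E => tl e = v).card =
                     (Finset.univ.filter fun e : E => hd e = v).card)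
    -- W is a walk starting at r
    (W : List E)
    (hstart : W = [] ∨ W.head?.map tl = some r)
    (hchain : List.Chain' (fun e f => hd e = tl f) W)
    (hnodup : W.Nodup)
    -- W avoids H: the H-arc at a vertex is used only when every other outgoing arc
    -- of that vertex has already been visited
    (havoid : ∀ i (hi : i < W.length), W.get ⟨i, hi⟩ ∈ H →
      ∀ e : E, tl e = tl (W.get ⟨i, hi⟩) → e ∉ H → e ∈ W.take i)
    -- v does not lie on a cycle of H
    (v : V) (hnocycle : ¬ Relation.TransGen (SubgraphStep tl hd H) v v) :
    ∀ k ≤ W.length, Exhausts tl hd (W.take k) v →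
      ∀ u : V, Relation.ReflTransGen (SubgraphStep tl hd H) u v →
        Exhausts tl hd (W.take k) u := by
  intro k hk hexv u hu
  have hPnd : (W.take k).Nodup := hnodup.sublist (List.take_sublist k W)
  have hPchain : List.Chain' (fun e f => hd e = tl f) (W.take k) := hchain.take k
  have hPstart : (W.take k) = [] ∨ ((W.take k).head?.map tl = some r) := by
    rcases hstart with h | h
    · left; simp [h]
    · cases W with
      | nil => left; simp
      | cons w ws =>
        cases k with
        | zero => left; simp
        | succ k => right; simpa using h
  induction hu using Relation.ReflTransGen.head_induction_on with
  | refl => exact hexv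
  | head hstep _ ih =>
    obtain ⟨e, heH, hte, hhe⟩ := hstep
    subst hte; subst hhe
    have hur : tl e ≠ r := hroot e heH
    have heP : e ∈ W.take k := ih e (Or.inr rfl)
    obtain ⟨i, hilt, hei⟩ := List.getElem_of_mem heP
    have hiW : i < W.length := by simp at hilt; omega
    have hik : i < k := by simp at hilt; omega
    have heW : W[i] = e := by rw [← hei]; exact (List.getElem_take).symm
    have hav := havoid i hiW (by rw [List.get_eq_getElem, heW]; exact heH)
    have htakesub : W.take i ⊆ W.take k := by
      intro x hx
      have h' : W.take i = (W.take k).take i := by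
        rw [List.take_take, Nat.min_eq_left (le_of_lt hik)]
      rw [h'] at hx
      exact List.take_subset _ _ hx
    have hout : ∀ f : E, tl f = tl e → f ∈ W.take k := by
      intro f hf
      by_cases hfH : f ∈ H
      · obtain ⟨e', _, huniq⟩ := hfun (tl e) hur
        have h1 : f = e' := huniq f ⟨hfH, hf⟩
        have h2 : e = e' := huniq e ⟨heH, rfl⟩
        rw [h1, ← h2]; exact heP
      · exact htakesub (hav f (by rw [List.get_eq_getElem, heW]; exact hf) hfH)
    refine exhausts_of_out tl hd (W.take k) hPnd (tl e) (hbal (tl e)) ?_ hout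
    have := walk_flow tl hd (W.take k) hPchain (tl e)
    rcases hPstart with h | h
    · simp [h]
    · rw [h] at this
      simpa [Ne.symm hur] using this
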